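/- arXiv:2510.08434 — 2 statements merged into one kernel-verified Lean document; each statement's English description precedes it below -/
import Mathlib

section
/- Sequential gentle measurement: let |ψ⟩ be a unit vector in a finite-dimensional Hilbert space, P₁,…,P_k orthogonal projections, and U₁,…,U_k unitaries. Then ‖U_k⋯U₁|ψ⟩ − P_k U_k ⋯ P₁ U₁|ψ⟩‖₂ ≤ k·√(1 − ‖P_k U_k ⋯ P₁ U₁|ψ⟩‖₂²). -/
open Matrix

/-- A matrix acting on Euclidean space. -/
noncomputable def act {N : ℕ} (M : Matrix (Fin N) (Fin N) ℂ)
    (x : EuclideanSpace ℂ (Fin N)) : EuclideanSpace ℂ (Fin N) :=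
  WithLp.toLp 2 (M.mulVec x)

/-- The state `U_j ⋯ U_1 |ψ⟩` after `j` unitaries. -/
noncomputable def chainU {N : ℕ} (U : ℕ → Matrix (Fin N) (Fin N) ℂ)
    (ψ : EuclideanSpace ℂ (Fin N)) : ℕ → EuclideanSpace ℂ (Fin N)
  | 0 => ψ
  | j + 1 => act (U (j + 1)) (chainU U ψ j)

/-- The state `P_j U_j ⋯ P_1 U_1 |ψ⟩` after `j` projected steps. -/
noncomputable def chainPU {N : ℕ} (P U : ℕ → Matrix (Fin N) (Fin N) ℂ)
    (ψ : EuclideanSpace ℂ (Fin N)) : ℕ → EuclideanSpace ℂ (Fin N)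
  | 0 => ψ
  | j + 1 => act (P (j + 1)) (act (U (j + 1)) (chainPU P U ψ j))


lemma act_eq {N : ℕ} (M : Matrix (Fin N) (Fin N) ℂ) (x : EuclideanSpace ℂ (Fin N)) :
    act M x = Matrix.toEuclideanLin M x := rfl

lemma act_act {N : ℕ} (A B : Matrix (Fin N) (Fin N) ℂ) (x : EuclideanSpace ℂ (Fin N)) :
    act A (act B x) = act (A * B) x := by
  simp [act, Matrix.mulVec_mulVec]

lemma act_one {N : ℕ} (x : EuclideanSpace ℂ (Fin N)) : act 1 x = x := by
  simp [act]

lemma act_sub {N : ℕ} (M : Matrix (Fin N) (Fin N) ℂ) (x y : EuclideanSpace ℂ (Fin N)) :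
    act M (x - y) = act M x - act M y := by
  simp [act_eq, map_sub]

lemma inner_act {N : ℕ} (M : Matrix (Fin N) (Fin N) ℂ) (x y : EuclideanSpace ℂ (Fin N)) :
    (inner ℂ (act M x) y : ℂ) = inner ℂ x (act Mᴴ y) := by
  rw [act_eq, act_eq, Matrix.toEuclideanLin_conjTranspose_eq_adjoint,
    LinearMap.adjoint_inner_right]

lemma norm_act_unitary {N : ℕ} {U : Matrix (Fin N) (Fin N) ℂ}
    (hU : U ∈ Matrix.unitaryGroup (Fin N) ℂ) (x : EuclideanSpace ℂ (Fin N)) :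
    ‖act U x‖ = ‖x‖ := by
  have h1 : (inner ℂ (act U x) (act U x) : ℂ) = inner ℂ x x := by
    rw [inner_act, act_act, show Uᴴ * U = 1 from hU.1, act_one]
  rw [inner_self_eq_norm_sq_to_K (𝕜 := ℂ), inner_self_eq_norm_sq_to_K (𝕜 := ℂ)] at h1
  have h2 : ‖act U x‖ ^ 2 = ‖x‖ ^ 2 := by exact_mod_cast h1
  nlinarith [norm_nonneg (act U x), norm_nonneg x]

lemma proj_pyth {N : ℕ} {P : Matrix (Fin N) (Fin N) ℂ} (hP1 : Pᴴ = P) (hP2 : P * P = P)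
    (x : EuclideanSpace ℂ (Fin N)) :
    ‖x - act P x‖ ^ 2 = ‖x‖ ^ 2 - ‖act P x‖ ^ 2 := by
  have horth : (inner ℂ (x - act P x) (act P x) : ℂ) = 0 := by
    rw [inner_sub_left, inner_act, act_act, hP1, hP2, sub_eq_zero]
  have h := norm_add_sq_eq_norm_sq_add_norm_sq_of_inner_eq_zero _ _ horth
  rw [sub_add_cancel] at h
  linarith

lemma norm_act_proj_le {N : ℕ} {P : Matrix (Fin N) (Fin N) ℂ} (hP1 : Pᴴ = P)
    (hP2 : P * P = P) (x : EuclideanSpace ℂ (Fin N)) : ‖act P x‖ ≤ ‖x‖ := by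
  have h := proj_pyth hP1 hP2 x
  nlinarith [sq_nonneg ‖x - act P x‖, norm_nonneg (act P x), norm_nonneg x]

lemma chainPU_norm_mono {N : ℕ} (P U : ℕ → Matrix (Fin N) (Fin N) ℂ)
    (ψ : EuclideanSpace ℂ (Fin N))
    (hP : ∀ i, (P i)ᴴ = P i ∧ P i * P i = P i)
    (hU : ∀ i, U i ∈ Matrix.unitaryGroup (Fin N) ℂ) (j : ℕ) :
    ‖chainPU P U ψ (j + 1)‖ ≤ ‖chainPU P U ψ j‖ := by
  show ‖act (P (j+1)) (act (U (j+1)) (chainPU P U ψ j))‖ ≤ _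
  calc ‖act (P (j+1)) (act (U (j+1)) (chainPU P U ψ j))‖
      ≤ ‖act (U (j+1)) (chainPU P U ψ j)‖ :=
        norm_act_proj_le (hP (j+1)).1 (hP (j+1)).2 _
    _ = ‖chainPU P U ψ j‖ := norm_act_unitary (hU (j+1)) _

lemma chainPU_norm_le_one {N : ℕ} (P U : ℕ → Matrix (Fin N) (Fin N) ℂ)
    (ψ : EuclideanSpace ℂ (Fin N)) (hψ : ‖ψ‖ = 1)
    (hP : ∀ i, (P i)ᴴ = P i ∧ P i * P i = P i)
    (hU : ∀ i, U i ∈ Matrix.unitaryGroup (Fin N) ℂ) (j : ℕ) :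
    ‖chainPU P U ψ j‖ ≤ 1 := by
  induction j with
  | zero => simp [chainPU, hψ]
  | succ j ih => exact le_trans (chainPU_norm_mono P U ψ hP hU j) ih

/-- Sequential gentle measurement: for a unit vector `ψ`, orthogonal projections
`P_1, …, P_k` and unitaries `U_1, …, U_k`,
`‖U_k⋯U_1 ψ − P_k U_k ⋯ P_1 U_1 ψ‖ ≤ k √(1 − ‖P_k U_k ⋯ P_1 U_1 ψ‖²)`. -/
theorem sequential_gentle_measurement {N : ℕ} (k : ℕ)
    (ψ : EuclideanSpace ℂ (Fin N)) (hψ : ‖ψ‖ = 1)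
    (P U : ℕ → Matrix (Fin N) (Fin N) ℂ)
    (hP : ∀ i, (P i)ᴴ = P i ∧ P i * P i = P i)
    (hU : ∀ i, U i ∈ Matrix.unitaryGroup (Fin N) ℂ) :
    ‖chainU U ψ k - chainPU P U ψ k‖ ≤
      k * Real.sqrt (1 - ‖chainPU P U ψ k‖ ^ 2) := by
  induction k with
  | zero => simp [chainU, chainPU]
  | succ k ih =>
    set φ := chainPU P U ψ k with hφdef
    set y := act (U (k + 1)) φ with hydef
    set φ' := chainPU P U ψ (k + 1) with hφ'def
    have hφ' : φ' = act (P (k + 1)) y := rfl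
    have hyn : ‖y‖ = ‖φ‖ := norm_act_unitary (hU (k + 1)) _
    have hφ1 : ‖φ‖ ≤ 1 := chainPU_norm_le_one P U ψ hψ hP hU k
    have hmono : ‖φ'‖ ≤ ‖φ‖ := chainPU_norm_mono P U ψ hP hU k
    have hφ'0 : (0:ℝ) ≤ ‖φ'‖ := norm_nonneg _
    have hφ'1 : ‖φ'‖ ≤ 1 := le_trans hmono hφ1
    have hsq : (0:ℝ) ≤ 1 - ‖φ'‖ ^ 2 := by nlinarith
    have key : chainU U ψ (k + 1) - chainPU P U ψ (k + 1)
        = act (U (k + 1)) (chainU U ψ k - φ) + (y - act (P (k + 1)) y) := by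
      show act (U (k + 1)) (chainU U ψ k) - act (P (k + 1)) y = _
      rw [act_sub]
      abel
    have hterm2 : ‖y - act (P (k + 1)) y‖ ≤ Real.sqrt (1 - ‖φ'‖ ^ 2) := by
      have h := proj_pyth (hP (k + 1)).1 (hP (k + 1)).2 y
      rw [← hφ'] at h
      have h2 : ‖y - act (P (k + 1)) y‖ ^ 2 ≤ 1 - ‖φ'‖ ^ 2 := by
        rw [← hφ', h, hyn]; nlinarith [norm_nonneg φ]
      calc ‖y - act (P (k + 1)) y‖ = Real.sqrt (‖y - act (P (k + 1)) y‖ ^ 2) :=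
            (Real.sqrt_sq (norm_nonneg _)).symm
        _ ≤ Real.sqrt (1 - ‖φ'‖ ^ 2) := Real.sqrt_le_sqrt h2
    have hterm1 : ‖chainU U ψ k - φ‖ ≤ k * Real.sqrt (1 - ‖φ'‖ ^ 2) := by
      refine le_trans ih ?_
      have : Real.sqrt (1 - ‖φ‖ ^ 2) ≤ Real.sqrt (1 - ‖φ'‖ ^ 2) := by
        apply Real.sqrt_le_sqrt; nlinarith
      exact mul_le_mul_of_nonneg_left this (Nat.cast_nonneg k)
    calc ‖chainU U ψ (k + 1) - chainPU P U ψ (k + 1)‖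
        ≤ ‖act (U (k + 1)) (chainU U ψ k - φ)‖ + ‖y - act (P (k + 1)) y‖ := by
          rw [key]; exact norm_add_le _ _
      _ = ‖chainU U ψ k - φ‖ + ‖y - act (P (k + 1)) y‖ := by
          rw [norm_act_unitary (hU (k + 1))]
      _ ≤ k * Real.sqrt (1 - ‖φ'‖ ^ 2) + Real.sqrt (1 - ‖φ'‖ ^ 2) :=
          add_le_add hterm1 hterm2
      _ = (k + 1 : ℕ) * Real.sqrt (1 - ‖φ'‖ ^ 2) := by push_cast; ring
end

section
/- Gentle measurement lemma: for any density operator ρ and orthogonal projection Π on a finite-dimensional Hilbert space, ‖ΠρΠ − ρ‖₁ ≤ 2√(1 − Tr(Πρ)). -/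
open Matrix
open scoped ComplexOrder

/-- The trace norm (sum of singular values) of a complex square matrix. -/
noncomputable def traceNorm {ι : Type*} [Fintype ι] [DecidableEq ι]
    (A : Matrix ι ι ℂ) : ℝ :=
  (((Matrix.posSemidef_conjTranspose_mul_self A).1.eigenvectorUnitary : Matrix ι ι ℂ) *
      diagonal (((↑) : ℝ → ℂ) ∘ (Real.sqrt ·) ∘ (Matrix.posSemidef_conjTranspose_mul_self A).1.eigenvalues) *
      (star (Matrix.posSemidef_conjTranspose_mul_self A).1.eigenvectorUnitary : Matrix ι ι ℂ)).trace.re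

section GentleAux

variable {N : ℕ}

private lemma trace_form (C D : Matrix (Fin N) (Fin N) ℂ) :
    (Cᴴ * D).trace = ∑ p : Fin N × Fin N, (starRingEnd ℂ) (C p.1 p.2) * D p.1 p.2 := by
  rw [Fintype.sum_prod_type]
  simp only [Matrix.trace, Matrix.mul_apply, Matrix.diag, Matrix.conjTranspose_apply,
    Finset.sum_congr]
  exact Finset.sum_comm

private lemma trace_conj_mul_self (C : Matrix (Fin N) (Fin N) ℂ) :
    (Cᴴ * C).trace.re = ∑ p : Fin N × Fin N, ‖C p.1 p.2‖ ^ 2 := by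
  rw [trace_form, Complex.re_sum]
  refine Finset.sum_congr rfl fun p _ => ?_
  rw [mul_comm, Complex.mul_conj]
  rw [Complex.ofReal_re, Complex.normSq_eq_norm_sq]

/-- Cauchy–Schwarz for the Frobenius inner product. -/
private lemma cs_trace (A B : Matrix (Fin N) (Fin N) ℂ) :
    ‖(Aᴴ * B).trace‖ ≤ Real.sqrt (Aᴴ * A).trace.re * Real.sqrt (Bᴴ * B).trace.re := by
  let a : EuclideanSpace ℂ (Fin N × Fin N) := WithLp.toLp 2 (fun p : Fin N × Fin N => A p.1 p.2)
  let b : EuclideanSpace ℂ (Fin N × Fin N) := WithLp.toLp 2 (fun p : Fin N × Fin N => B p.1 p.2)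
  have h1 : (Aᴴ * B).trace = inner (𝕜 := ℂ) a b := by
    rw [trace_form]
    simp [PiLp.inner_apply, RCLike.inner_apply, a, b]
    exact Finset.sum_congr rfl fun _ _ => mul_comm _ _
  have h2 : ‖a‖ = Real.sqrt (Aᴴ * A).trace.re := by
    rw [EuclideanSpace.norm_eq, trace_conj_mul_self]
  have h3 : ‖b‖ = Real.sqrt (Bᴴ * B).trace.re := by
    rw [EuclideanSpace.norm_eq, trace_conj_mul_self]
  rw [h1, ← h2, ← h3]
  exact norm_inner_le_norm a b

open scoped MatrixOrder in
private lemma psd_trace_re_nonneg {A : Matrix (Fin N) (Fin N) ℂ} (hA : A.PosSemidef) :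
    0 ≤ A.trace.re := by
  obtain ⟨B, rfl⟩ := CStarAlgebra.nonneg_iff_eq_star_mul_self.mp hA.nonneg
  rw [star_eq_conjTranspose, trace_conj_mul_self]
  positivity

open scoped MatrixOrder in
private lemma traceNorm_eq_of_sq {A S : Matrix (Fin N) (Fin N) ℂ} (hS : S.PosSemidef)
    (h : S * S = Aᴴ * A) : traceNorm A = S.trace.re := by
  have h1 := (posSemidef_conjTranspose_mul_self A).1.cfc_eq Real.sqrt
  rw [IsHermitian.cfc, Unitary.conjStarAlgAut_apply] at h1
  have h2 : CFC.sqrt (Aᴴ * A) = S := CFC.sqrt_unique h hS.nonneg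
  rw [CFC.sqrt_eq_real_sqrt _ (posSemidef_conjTranspose_mul_self A).nonneg, cfcₙ_eq_cfc, h1] at h2
  rw [traceNorm, ← h2]
  rfl

open scoped MatrixOrder in
private lemma exists_sqrt_psd {ρ : Matrix (Fin N) (Fin N) ℂ} (hρ : ρ.PosSemidef) :
    ∃ s : Matrix (Fin N) (Fin N) ℂ, s * s = ρ ∧ sᴴ = s :=
  ⟨CFC.sqrt ρ, CFC.sqrt_mul_sqrt_self ρ hρ.nonneg, (CFC.sqrt_nonneg ρ).posSemidef.1⟩

end GentleAux

/-- Gentle measurement lemma: for any density operator `ρ` and orthogonal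
projection `Π`, `‖ΠρΠ − ρ‖₁ ≤ 2√(1 − Tr(Πρ))`. -/
theorem gentle_measurement {N : ℕ} (ρ Pj : Matrix (Fin N) (Fin N) ℂ)
    (hρ : ρ.PosSemidef) (hρtr : ρ.trace = 1)
    (hPj : Pjᴴ = Pj ∧ Pj * Pj = Pj) :
    traceNorm (Pj * ρ * Pj - ρ) ≤ 2 * Real.sqrt (1 - (Pj * ρ).trace.re) := by
  obtain ⟨hPH, hPP⟩ := hPj
  have hρH : ρᴴ = ρ := hρ.1
  set M : Matrix (Fin N) (Fin N) ℂ := Pj * ρ * Pj - ρ with hMdef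
  have hMH : M.IsHermitian := by
    show Mᴴ = M
    simp only [hMdef, conjTranspose_sub, conjTranspose_mul, hPH, hρH, Matrix.mul_assoc]
  -- spectral data
  set V : Matrix (Fin N) (Fin N) ℂ := (hMH.eigenvectorUnitary : Matrix (Fin N) (Fin N) ℂ)
    with hVdef
  have hV1 : Vᴴ * V = 1 := by
    simpa [Matrix.star_eq_conjTranspose] using
      Matrix.mem_unitaryGroup_iff'.mp hMH.eigenvectorUnitary.2
  have hV2 : V * Vᴴ = 1 := by
    simpa [Matrix.star_eq_conjTranspose] using
      Matrix.mem_unitaryGroup_iff.mp hMH.eigenvectorUnitary.2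
  set lam := hMH.eigenvalues with hlam
  have hspec : M = V * diagonal (fun i => (lam i : ℂ)) * Vᴴ := by
    simpa [Matrix.star_eq_conjTranspose, Function.comp_def] using hMH.spectral_theorem
  have key : ∀ f g : Fin N → ℂ,
      (V * diagonal f * Vᴴ) * (V * diagonal g * Vᴴ)
        = V * diagonal (fun i => f i * g i) * Vᴴ := by
    intro f g
    calc (V * diagonal f * Vᴴ) * (V * diagonal g * Vᴴ)
        = V * (diagonal f * ((Vᴴ * V) * (diagonal g * Vᴴ))) := by
          simp only [Matrix.mul_assoc]
      _ = V * diagonal (fun i => f i * g i) * Vᴴ := by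
          rw [hV1, one_mul, ← Matrix.mul_assoc (diagonal f) (diagonal g) Vᴴ,
            Matrix.diagonal_mul_diagonal, ← Matrix.mul_assoc]
  -- sign unitary and |M|
  set sg : Fin N → ℂ := fun i => if lam i < 0 then -1 else 1 with hsg
  set U : Matrix (Fin N) (Fin N) ℂ := V * diagonal sg * Vᴴ with hUdef
  set S : Matrix (Fin N) (Fin N) ℂ := V * diagonal (fun i => ((|lam i| : ℝ) : ℂ)) * Vᴴ with hSdef
  have hsgstar : star sg = sg := by
    funext i
    simp only [Pi.star_apply, hsg]
    split_ifs <;> simp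
  have hUH : Uᴴ = U := by
    rw [hUdef]
    simp only [conjTranspose_mul, conjTranspose_conjTranspose, diagonal_conjTranspose, hsgstar,
      Matrix.mul_assoc]
  have hUU : Uᴴ * U = 1 := by
    rw [hUH, hUdef, key]
    have : (fun i => sg i * sg i) = fun _ => (1 : ℂ) := by
      funext i
      simp only [hsg]
      split_ifs <;> ring
    rw [this, Matrix.diagonal_one, mul_one, hV2]
  have hfun : (fun i => sg i * (lam i : ℂ)) = fun i => ((|lam i| : ℝ) : ℂ) := by
    funext i
    simp only [hsg]
    split_ifs with h
    · rw [abs_of_neg h]; push_cast; ring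
    · rw [abs_of_nonneg (not_lt.mp h)]; ring
  have hUM : U * M = S := by
    rw [hUdef, hspec, key, hfun, hSdef]
  have hSpsd : S.PosSemidef := by
    have hd : Matrix.PosSemidef (diagonal (fun i => ((|lam i| : ℝ) : ℂ))) := by
      refine posSemidef_diagonal_iff.mpr fun i => ?_
      exact_mod_cast Complex.zero_le_real.mpr (abs_nonneg _)
    simpa [hSdef, Matrix.star_eq_conjTranspose] using hd.mul_mul_conjTranspose_same V
  have habs2 : (fun i => ((|lam i| : ℝ) : ℂ) * ((|lam i| : ℝ) : ℂ))
      = fun i => ((lam i : ℝ) : ℂ) * ((lam i : ℝ) : ℂ) := by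
    funext i
    exact_mod_cast abs_mul_abs_self (lam i)
  have hsq : S ^ 2 = Mᴴ * M := by
    rw [pow_two, hSdef, key, habs2, hMH.eq, hspec, key]
  have hS : traceNorm M = S.trace.re :=
    traceNorm_eq_of_sq hSpsd (by rw [← pow_two, hsq])
  have htn : traceNorm M = (U * M).trace.re := by
    rw [hS, hUM]
  -- decomposition
  set Q : Matrix (Fin N) (Fin N) ℂ := 1 - Pj with hQdef
  have hQH : Qᴴ = Q := by
    simp [hQdef, conjTranspose_sub, hPH]
  have hQQ : Q * Q = Q := by
    simp only [hQdef, sub_mul, mul_sub, one_mul, mul_one, hPP]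
    abel
  have hMsplit : M = -(Q * (ρ * Pj)) - ρ * Q := by
    simp only [hMdef, hQdef, sub_mul, mul_sub, one_mul, mul_one, neg_sub, Matrix.mul_assoc]
    abel
  -- square root of ρ
  obtain ⟨s, hss, hsH⟩ := exists_sqrt_psd hρ
  -- traces
  set t : ℝ := (Pj * ρ).trace.re with ht
  have hQtr : (Q * ρ).trace = 1 - (Pj * ρ).trace := by
    rw [hQdef, sub_mul, one_mul, trace_sub, hρtr]
  have hQρQ : (Q * ρ * Q).trace = (Q * ρ).trace := by
    rw [trace_mul_cycle Q ρ Q, hQQ]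
  have hPρP : (Pj * ρ * Pj).trace = (Pj * ρ).trace := by
    rw [trace_mul_cycle Pj ρ Pj, hPP]
  have hQnn : 0 ≤ (Q * ρ * Q).trace.re := by
    refine psd_trace_re_nonneg ?_
    have := hρ.mul_mul_conjTranspose_same Q
    rwa [hQH] at this
  have hPnn : 0 ≤ (Pj * ρ * Pj).trace.re := by
    refine psd_trace_re_nonneg ?_
    have := hρ.mul_mul_conjTranspose_same Pj
    rwa [hPH] at this
  have htnn : 0 ≤ t := by rwa [hPρP] at hPnn
  have hεnn : 0 ≤ 1 - t := by
    rw [hQρQ, hQtr] at hQnn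
    simpa using hQnn
  have ht1 : t ≤ 1 := by linarith
  -- term 1 : Tr (U * (Q * ρ * Pj))
  have hT1 : ‖(U * (Q * (ρ * Pj))).trace‖ ≤ Real.sqrt (1 - t) * Real.sqrt t := by
    have e0 : U * (Q * (ρ * Pj)) = (s * (Q * Uᴴ))ᴴ * (s * Pj) := by
      simp only [conjTranspose_mul, conjTranspose_conjTranspose, hQH, hsH, ← hss,
        Matrix.mul_assoc]
    have eA : (s * (Q * Uᴴ))ᴴ * (s * (Q * Uᴴ)) = U * (Q * ρ * Q) * Uᴴ := by
      simp only [conjTranspose_mul, conjTranspose_conjTranspose, hQH, hsH, ← hss,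
        Matrix.mul_assoc]
    have eAtr : ((s * (Q * Uᴴ))ᴴ * (s * (Q * Uᴴ))).trace.re = 1 - t := by
      rw [eA, trace_mul_cycle U (Q * ρ * Q) Uᴴ, hUU, one_mul, hQρQ, hQtr]
      simp [ht]
    have eB : (s * Pj)ᴴ * (s * Pj) = Pj * ρ * Pj := by
      simp only [conjTranspose_mul, hPH, hsH, ← hss, Matrix.mul_assoc]
    have eBtr : ((s * Pj)ᴴ * (s * Pj)).trace.re = t := by
      rw [eB, hPρP, ht]
    calc ‖(U * (Q * (ρ * Pj))).trace‖
        = ‖((s * (Q * Uᴴ))ᴴ * (s * Pj)).trace‖ := by rw [e0]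
      _ ≤ _ := cs_trace _ _
      _ = Real.sqrt (1 - t) * Real.sqrt t := by rw [eAtr, eBtr]
  -- term 2 : Tr (U * (ρ * Q))
  have hT2 : ‖(U * (ρ * Q)).trace‖ ≤ Real.sqrt (1 - t) := by
    have e0 : U * (ρ * Q) = (s * Uᴴ)ᴴ * (s * Q) := by
      simp only [conjTranspose_mul, conjTranspose_conjTranspose, hQH, hsH, ← hss,
        Matrix.mul_assoc]
    have eA : (s * Uᴴ)ᴴ * (s * Uᴴ) = U * ρ * Uᴴ := by
      simp only [conjTranspose_mul, conjTranspose_conjTranspose, hsH, ← hss, Matrix.mul_assoc]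
    have eAtr : ((s * Uᴴ)ᴴ * (s * Uᴴ)).trace.re = 1 := by
      rw [eA, trace_mul_cycle U ρ Uᴴ, hUU, one_mul, hρtr]
      simp
    have eB : (s * Q)ᴴ * (s * Q) = Q * ρ * Q := by
      simp only [conjTranspose_mul, hQH, hsH, ← hss, Matrix.mul_assoc]
    have eBtr : ((s * Q)ᴴ * (s * Q)).trace.re = 1 - t := by
      rw [eB, hQρQ, hQtr]
      simp [ht]
    calc ‖(U * (ρ * Q)).trace‖
        = ‖((s * Uᴴ)ᴴ * (s * Q)).trace‖ := by rw [e0]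
      _ ≤ _ := cs_trace _ _
      _ = Real.sqrt (1 - t) := by rw [eAtr, eBtr, Real.sqrt_one, one_mul]
  -- assemble
  have hsplit' : (U * M).trace = -(U * (Q * (ρ * Pj))).trace - (U * (ρ * Q)).trace := by
    rw [hMsplit]
    simp only [mul_sub, mul_neg, trace_sub, trace_neg]
  have hre : (U * M).trace.re ≤ ‖(U * (Q * (ρ * Pj))).trace‖ + ‖(U * (ρ * Q)).trace‖ := by
    rw [hsplit']
    have h1 : (-(U * (Q * (ρ * Pj))).trace - (U * (ρ * Q)).trace).re
        = -((U * (Q * (ρ * Pj))).trace.re) - (U * (ρ * Q)).trace.re := by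
      simp
    rw [h1]
    have a1 := Complex.abs_re_le_norm ((U * (Q * (ρ * Pj))).trace)
    have a2 := Complex.abs_re_le_norm ((U * (ρ * Q)).trace)
    have b1 := neg_abs_le ((U * (Q * (ρ * Pj))).trace.re)
    have b2 := neg_abs_le ((U * (ρ * Q)).trace.re)
    linarith
  have hsqt1 : Real.sqrt t ≤ 1 := Real.sqrt_le_one.mpr ht1
  have hsqnn : 0 ≤ Real.sqrt (1 - t) := Real.sqrt_nonneg _
  calc traceNorm M = (U * M).trace.re := htn
    _ ≤ ‖(U * (Q * (ρ * Pj))).trace‖ + ‖(U * (ρ * Q)).trace‖ := hre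
    _ ≤ Real.sqrt (1 - t) * Real.sqrt t + Real.sqrt (1 - t) := add_le_add hT1 hT2
    _ ≤ Real.sqrt (1 - t) * 1 + Real.sqrt (1 - t) := by
        gcongr
    _ = 2 * Real.sqrt (1 - t) := by ring
end
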